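/- Suppose Conditions 1 and 2 hold with 0 ≤ C < 1/2 and NGD is run with step size 0 < η ≤ (1-2C)/(1+C)². Then for every iteration k: (1) ‖θ(k) - θ(0)‖₂ ≤ 3‖y - u(0)‖₂ / √λmin(G(0)), and (2) λmin(G(k)) ≥ (4/9)·λmin(G(0)). -/

import Mathlib

open Matrix MeasureTheory ProbabilityTheory Real
open scoped BigOperators ENNReal NNReal

/-- Euclidean norm of a finitely-indexed real vector. -/
noncomputable def enorm2 {ι : Type*} [Fintype ι] (v : ι → ℝ) : ℝ :=
  Real.sqrt (∑ i, v i * v i)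

/-- Euclidean norm of a vector in `Fin n → ℝ`. -/
noncomputable def vnorm {n : ℕ} (v : Fin n → ℝ) : ℝ := Real.sqrt (v ⬝ᵥ v)

/-- Spectral norm (ℓ²-operator norm) of a matrix. -/
noncomputable def specNorm {ι κ : Type*} [Fintype ι] [Fintype κ] (A : Matrix ι κ ℝ) : ℝ :=
  sSup {r : ℝ | ∃ v : κ → ℝ, enorm2 v = 1 ∧ r = enorm2 (A *ᵥ v)}

/-- Smallest eigenvalue of a symmetric matrix, via the Rayleigh quotient. -/
noncomputable def lamMin {n : ℕ} (A : Matrix (Fin n) (Fin n) ℝ) : ℝ :=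
  sInf {r : ℝ | ∃ v : Fin n → ℝ, vnorm v = 1 ∧ r = v ⬝ᵥ (A *ᵥ v)}

/-- Largest eigenvalue of a symmetric matrix, via the Rayleigh quotient. -/
noncomputable def lamMax {n : ℕ} (A : Matrix (Fin n) (Fin n) ℝ) : ℝ :=
  sSup {r : ℝ | ∃ v : Fin n → ℝ, vnorm v = 1 ∧ r = v ⬝ᵥ (A *ᵥ v)}

open scoped Matrix.Norms.L2Operator

-- cast to Euclidean space
noncomputable def ee {ι : Type*} [Fintype ι] (v : ι → ℝ) : EuclideanSpace ℝ ι :=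
  (WithLp.equiv 2 (ι → ℝ)).symm v

lemma ee_apply {ι : Type*} [Fintype ι] (v : ι → ℝ) (i : ι) : ee v i = v i := rfl

lemma ee_sub {ι : Type*} [Fintype ι] (v w : ι → ℝ) : ee (v - w) = ee v - ee w := rfl

lemma ee_add {ι : Type*} [Fintype ι] (v w : ι → ℝ) : ee (v + w) = ee v + ee w := rfl

lemma ee_smul {ι : Type*} [Fintype ι] (c : ℝ) (v : ι → ℝ) : ee (c • v) = c • ee v := rfl

lemma ee_neg {ι : Type*} [Fintype ι] (v : ι → ℝ) : ee (-v) = - ee v := rfl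

lemma ee_zero {ι : Type*} [Fintype ι] : ee (0 : ι → ℝ) = 0 := rfl

lemma enorm2_eq {ι : Type*} [Fintype ι] (v : ι → ℝ) : enorm2 v = ‖ee v‖ := by
  rw [EuclideanSpace.norm_eq, enorm2]
  congr 1
  refine Finset.sum_congr rfl fun i _ => ?_
  rw [ee_apply, Real.norm_eq_abs, sq_abs, sq]

lemma vnorm_eq {n : ℕ} (v : Fin n → ℝ) : vnorm v = ‖ee v‖ := by
  rw [← enorm2_eq, vnorm, enorm2, dotProduct]

lemma dot_eq_inner {ι : Type*} [Fintype ι] (v w : ι → ℝ) :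
    v ⬝ᵥ w = inner ℝ (ee v) (ee w) := by
  rw [PiLp.inner_apply, dotProduct]
  simp [ee_apply, RCLike.inner_apply, mul_comm]

-- matrix to CLM
noncomputable def mcl {ι κ : Type*} [Fintype ι] [Fintype κ] [DecidableEq κ] (A : Matrix ι κ ℝ) :
    EuclideanSpace ℝ κ →L[ℝ] EuclideanSpace ℝ ι :=
  (Matrix.toEuclideanLin.trans LinearMap.toContinuousLinearMap) A

lemma mcl_apply {ι κ : Type*} [Fintype ι] [Fintype κ] [DecidableEq κ] (A : Matrix ι κ ℝ) (v : κ → ℝ) :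
    mcl A (ee v) = ee (A *ᵥ v) := by
  simp [mcl, ee, Matrix.toEuclideanLin_apply]

lemma norm_mcl {ι κ : Type*} [Fintype ι] [Fintype κ] [DecidableEq κ] (A : Matrix ι κ ℝ) :
    ‖mcl A‖ = ‖A‖ := rfl

lemma mcl_sub {ι κ : Type*} [Fintype ι] [Fintype κ] [DecidableEq κ] (A B : Matrix ι κ ℝ) :
    mcl (A - B) = mcl A - mcl B := by
  simp [mcl, map_sub]

lemma specNorm_eq {ι κ : Type*} [Fintype ι] [Fintype κ] [DecidableEq κ] (A : Matrix ι κ ℝ) :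
    specNorm A = ‖A‖ := by
  have hub : ∀ r ∈ {r : ℝ | ∃ v : κ → ℝ, enorm2 v = 1 ∧ r = enorm2 (A *ᵥ v)}, r ≤ ‖A‖ := by
    rintro r ⟨v, hv, rfl⟩
    rw [enorm2_eq, ← mcl_apply]
    calc ‖mcl A (ee v)‖ ≤ ‖mcl A‖ * ‖ee v‖ := (mcl A).le_opNorm _
    _ = ‖A‖ := by rw [norm_mcl, ← enorm2_eq, hv, mul_one]
  refine le_antisymm (Real.sSup_le hub (norm_nonneg _)) ?_
  rw [← norm_mcl]
  refine ContinuousLinearMap.opNorm_le_bound _ ?_ ?_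
  · by_cases h : ∃ v : κ → ℝ, enorm2 v = 1
    · obtain ⟨v, hv⟩ := h
      have := le_csSup (s := {r : ℝ | ∃ v : κ → ℝ, enorm2 v = 1 ∧ r = enorm2 (A *ᵥ v)})
        (BddAbove.mono (fun r hr => le_of_lt (lt_of_le_of_lt (hub r hr) (lt_add_one _)) :
          _ ⊆ Set.Iic (‖A‖ + 1)) bddAbove_Iic) ⟨v, hv, rfl⟩
      exact le_trans (by rw [enorm2_eq]; positivity) this
    · have : {r : ℝ | ∃ v : κ → ℝ, enorm2 v = 1 ∧ r = enorm2 (A *ᵥ v)} = ∅ := by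
        ext r; simp only [Set.mem_setOf_eq, Set.mem_empty_iff_false, iff_false]
        rintro ⟨v, hv, _⟩; exact h ⟨v, hv⟩
      rw [specNorm, this, Real.sSup_empty]
  · intro x
    by_cases hx : x = 0
    · simp [hx]
    · have hxn : (0:ℝ) < ‖x‖ := norm_pos_iff.mpr hx
      set v : κ → ℝ := (WithLp.equiv 2 (κ → ℝ)) x with hv
      have hev : ee v = x := rfl
      set w : κ → ℝ := ‖x‖⁻¹ • v with hw
      have hwn : enorm2 w = 1 := by
        rw [enorm2_eq, hw, ee_smul, norm_smul, hev]
        simp [abs_of_pos (inv_pos.mpr hxn), inv_mul_cancel₀ hxn.ne']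
      have hmem : enorm2 (A *ᵥ w) ∈
          {r : ℝ | ∃ v : κ → ℝ, enorm2 v = 1 ∧ r = enorm2 (A *ᵥ v)} := ⟨w, hwn, rfl⟩
      have hle := le_csSup (s := {r : ℝ | ∃ v : κ → ℝ, enorm2 v = 1 ∧ r = enorm2 (A *ᵥ v)})
        (BddAbove.mono (fun r hr => hub r hr : _ ⊆ Set.Iic (‖A‖)) bddAbove_Iic) hmem
      have key : enorm2 (A *ᵥ w) = ‖x‖⁻¹ * ‖mcl A x‖ := by
        rw [hw, Matrix.mulVec_smul, enorm2_eq, ee_smul, norm_smul, ← hev, mcl_apply]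
        simp [hev, abs_of_pos (inv_pos.mpr hxn)]
      rw [key] at hle
      calc ‖mcl A x‖ = ‖x‖ * (‖x‖⁻¹ * ‖mcl A x‖) := by field_simp
      _ ≤ ‖x‖ * specNorm A := by
          exact mul_le_mul_of_nonneg_left hle hxn.le
      _ = specNorm A * ‖x‖ := mul_comm _ _

section Lam
variable {n p : ℕ}

lemma quad_eq (J : Matrix (Fin n) (Fin p) ℝ) (v : Fin n → ℝ) :
    v ⬝ᵥ ((J * Jᵀ) *ᵥ v) = (Jᵀ *ᵥ v) ⬝ᵥ (Jᵀ *ᵥ v) := by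
  rw [← Matrix.mulVec_mulVec, Matrix.dotProduct_mulVec, Matrix.mulVec_transpose]

lemma quad_nonneg (J : Matrix (Fin n) (Fin p) ℝ) (v : Fin n → ℝ) :
    0 ≤ v ⬝ᵥ ((J * Jᵀ) *ᵥ v) := by
  rw [quad_eq, dot_eq_inner]
  exact real_inner_self_nonneg

lemma lamMin_le_rayleigh (J : Matrix (Fin n) (Fin p) ℝ) (v : Fin n → ℝ) (hv : vnorm v = 1) :
    lamMin (J * Jᵀ) ≤ v ⬝ᵥ ((J * Jᵀ) *ᵥ v) := by
  refine csInf_le ⟨0, ?_⟩ ⟨v, hv, rfl⟩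
  rintro r ⟨w, hw, rfl⟩
  exact quad_nonneg J w

lemma quad_lower (J : Matrix (Fin n) (Fin p) ℝ) {c : ℝ} (hc : 0 ≤ c)
    (h : c ≤ lamMin (J * Jᵀ)) (w : Fin n → ℝ) :
    c * (‖ee w‖ * ‖ee w‖) ≤ w ⬝ᵥ ((J * Jᵀ) *ᵥ w) := by
  by_cases hw : w = 0
  · simp [hw, ee_zero, quad_nonneg]
  · have hwn : (0:ℝ) < ‖ee w‖ := by
      rw [norm_pos_iff]
      exact fun h0 => hw (funext fun i => by simpa [ee_apply] using congrArg (fun z : EuclideanSpace ℝ _ => z i) h0)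
    set v : Fin n → ℝ := ‖ee w‖⁻¹ • w with hv
    have hvu : vnorm v = 1 := by
      rw [vnorm_eq, hv, ee_smul, norm_smul]
      simp [abs_of_pos (inv_pos.mpr hwn), inv_mul_cancel₀ hwn.ne']
    have h1 := le_trans h (lamMin_le_rayleigh J v hvu)
    have h2 : v ⬝ᵥ ((J * Jᵀ) *ᵥ v) = (‖ee w‖⁻¹ * ‖ee w‖⁻¹) * (w ⬝ᵥ ((J * Jᵀ) *ᵥ w)) := by
      rw [hv]
      simp [Matrix.mulVec_smul, smul_dotProduct, dotProduct_smul, smul_eq_mul]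
      ring
    rw [h2] at h1
    have := mul_le_mul_of_nonneg_left h1 (mul_pos hwn hwn).le
    calc c * (‖ee w‖ * ‖ee w‖) = ‖ee w‖ * ‖ee w‖ * c := by ring
    _ ≤ ‖ee w‖ * ‖ee w‖ * ((‖ee w‖⁻¹ * ‖ee w‖⁻¹) * (w ⬝ᵥ ((J * Jᵀ) *ᵥ w))) := this
    _ = w ⬝ᵥ ((J * Jᵀ) *ᵥ w) := by field_simp

lemma exists_unit_vnorm (hn : 0 < n) : ∃ v : Fin n → ℝ, vnorm v = 1 := by
  refine ⟨fun j => if j = ⟨0, hn⟩ then 1 else 0, ?_⟩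
  rw [vnorm, dotProduct]
  rw [Finset.sum_eq_single ⟨0, hn⟩]
  · simp
  · intro b _ hb; simp [hb]
  · simp

lemma le_lamMin (hn : 0 < n) {G : Matrix (Fin n) (Fin n) ℝ} {c : ℝ}
    (h : ∀ v : Fin n → ℝ, vnorm v = 1 → c ≤ v ⬝ᵥ (G *ᵥ v)) : c ≤ lamMin G := by
  obtain ⟨v0, hv0⟩ := exists_unit_vnorm hn
  refine le_csInf ⟨v0 ⬝ᵥ (G *ᵥ v0), v0, hv0, rfl⟩ ?_
  rintro r ⟨v, hv, rfl⟩
  exact h v hv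

lemma inner_mcl (G : Matrix (Fin n) (Fin n) ℝ) (v : Fin n → ℝ) :
    inner ℝ (ee v) (mcl G (ee v)) = v ⬝ᵥ (G *ᵥ v) := by
  rw [mcl_apply, ← dot_eq_inner]

lemma lamMin_pos (hn : 0 < n) (J : Matrix (Fin n) (Fin p) ℝ)
    (hpd : (J * Jᵀ).PosDef) : 0 < lamMin (J * Jᵀ) := by
  set G := J * Jᵀ with hG
  set f : EuclideanSpace ℝ (Fin n) → ℝ := fun x => inner ℝ x (mcl G x) with hf
  have hfc : Continuous f := Continuous.inner continuous_id (mcl G).continuous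
  obtain ⟨v0, hv0⟩ := exists_unit_vnorm hn
  have hmem : ee v0 ∈ Metric.sphere (0 : EuclideanSpace ℝ (Fin n)) 1 := by
    rw [mem_sphere_zero_iff_norm, ← vnorm_eq, hv0]
  obtain ⟨x0, hx0mem, hmin⟩ := (isCompact_sphere (0 : EuclideanSpace ℝ (Fin n)) 1).exists_isMinOn
    ⟨ee v0, hmem⟩ hfc.continuousOn
  have hx0 : x0 ≠ 0 := by
    intro h0
    rw [h0, mem_sphere_zero_iff_norm, norm_zero] at hx0mem
    norm_num at hx0mem
  have hx0' : ((WithLp.equiv 2 (Fin n → ℝ)) x0 : Fin n → ℝ) ≠ 0 := by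
    intro h0
    exact hx0 ((WithLp.equiv 2 (Fin n → ℝ)).injective (by rw [h0]; simp))
  have hpos : 0 < f x0 := by
    have h2 := hpd.dotProduct_mulVec_pos hx0'
    have h3 : star ((WithLp.equiv 2 (Fin n → ℝ)) x0) = (WithLp.equiv 2 (Fin n → ℝ)) x0 := by
      funext i; simp
    rw [h3] at h2
    have h4 : f x0 = ((WithLp.equiv 2 (Fin n → ℝ)) x0) ⬝ᵥ (G *ᵥ ((WithLp.equiv 2 (Fin n → ℝ)) x0)) :=
      inner_mcl G _
    rw [h4]; exact h2
  refine lt_of_lt_of_le hpos (le_lamMin hn ?_)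
  intro v hv
  have : f x0 ≤ f (ee v) := hmin (by rw [Metric.mem_sphere, dist_zero_right, ← vnorm_eq, hv])
  rw [← inner_mcl G v]; exact this

end Lam

section Main
variable {n p : ℕ}

lemma ee_ne_zero {ι : Type*} [Fintype ι] {v : ι → ℝ} (hv : v ≠ 0) : ee v ≠ 0 :=
  fun h0 => hv (funext fun i => by simpa [ee_apply] using congrArg (fun z : EuclideanSpace ℝ _ => z i) h0)

lemma norm_ee_pos {ι : Type*} [Fintype ι] {v : ι → ℝ} (hv : v ≠ 0) : 0 < ‖ee v‖ :=
  norm_pos_iff.mpr (ee_ne_zero hv)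

lemma conjT_eq_transpose (A : Matrix (Fin n) (Fin p) ℝ) : Aᴴ = Aᵀ := by
  ext i j; simp [Matrix.conjTranspose_apply]

lemma normT (A : Matrix (Fin n) (Fin p) ℝ) : ‖Aᵀ‖ = ‖A‖ := by
  rw [← conjT_eq_transpose, Matrix.l2_opNorm_conjTranspose]

lemma posdef_of_lower (J : Matrix (Fin n) (Fin p) ℝ) {c : ℝ} (hc : 0 < c)
    (h : c ≤ lamMin (J * Jᵀ)) : (J * Jᵀ).PosDef := by
  refine Matrix.PosDef.of_dotProduct_mulVec_pos ?_ ?_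
  · have := Matrix.isHermitian_mul_conjTranspose_self J
    rwa [conjT_eq_transpose] at this
  · intro x hx
    have h1 : star x = x := funext fun i => by simp
    rw [h1]
    have h2 := quad_lower J hc.le h x
    have h3 : 0 < ‖ee x‖ := norm_ee_pos hx
    calc (0:ℝ) < c * (‖ee x‖ * ‖ee x‖) := by positivity
    _ ≤ x ⬝ᵥ ((J * Jᵀ) *ᵥ x) := h2

lemma G_inv_cancel {G : Matrix (Fin n) (Fin n) ℝ} (hpd : G.PosDef) (r : Fin n → ℝ) :
    G *ᵥ (G⁻¹ *ᵥ r) = r := by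
  rw [Matrix.mulVec_mulVec, Matrix.mul_nonsing_inv _ hpd.det_pos.ne'.isUnit, Matrix.one_mulVec]

lemma step_norm_le (J : Matrix (Fin n) (Fin p) ℝ) (r : Fin n → ℝ) {c : ℝ} (hc : 0 < c)
    (h : c ≤ lamMin (J * Jᵀ)) :
    ‖ee (Jᵀ *ᵥ ((J * Jᵀ)⁻¹ *ᵥ r))‖ ≤ ‖ee r‖ / Real.sqrt c := by
  set G := J * Jᵀ with hG
  have hpd : G.PosDef := posdef_of_lower J hc h
  set w : Fin n → ℝ := G⁻¹ *ᵥ r with hw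
  set s : ℝ := ‖ee (Jᵀ *ᵥ w)‖ with hs
  have hsc : (0:ℝ) < Real.sqrt c := Real.sqrt_pos.mpr hc
  have hsq : s * s = w ⬝ᵥ (G *ᵥ w) := by
    rw [quad_eq, dot_eq_inner, real_inner_self_eq_norm_mul_norm]
  have hcancel : G *ᵥ w = r := G_inv_cancel hpd r
  have hCS : w ⬝ᵥ (G *ᵥ w) ≤ ‖ee w‖ * ‖ee r‖ := by
    rw [hcancel, dot_eq_inner]
    exact real_inner_le_norm _ _
  have hwle : ‖ee w‖ ≤ s / Real.sqrt c := by
    have h5 : (Real.sqrt c * ‖ee w‖) * (Real.sqrt c * ‖ee w‖) ≤ s * s := by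
      rw [show (Real.sqrt c * ‖ee w‖) * (Real.sqrt c * ‖ee w‖)
          = (Real.sqrt c * Real.sqrt c) * (‖ee w‖ * ‖ee w‖) from by ring,
        Real.mul_self_sqrt hc.le, hsq]
      exact quad_lower J hc.le h w
    have h6 := Real.sqrt_le_sqrt h5
    rw [Real.sqrt_mul_self (by positivity), Real.sqrt_mul_self (norm_nonneg _)] at h6
    rw [div_eq_inv_mul, le_inv_mul_iff₀ hsc]
    linarith
  by_cases hs0 : s = 0
  · rw [hs0]; positivity
  · have hspos : 0 < s := lt_of_le_of_ne (norm_nonneg _) (Ne.symm hs0)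
    have key : s * s ≤ (s / Real.sqrt c) * ‖ee r‖ := by
      calc s * s = w ⬝ᵥ (G *ᵥ w) := hsq
      _ ≤ ‖ee w‖ * ‖ee r‖ := hCS
      _ ≤ (s / Real.sqrt c) * ‖ee r‖ := by
          exact mul_le_mul_of_nonneg_right hwle (norm_nonneg _)
    have : s ≤ ‖ee r‖ / Real.sqrt c := by
      rw [div_mul_eq_mul_div, div_eq_inv_mul] at key
      rw [div_eq_inv_mul]
      nlinarith [hsc]
    exact this

lemma lamMin_lower (hn : 0 < n) (J0 Jk : Matrix (Fin n) (Fin p) ℝ)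
    (hnorm : ‖Jk - J0‖ ≤ Real.sqrt (lamMin (J0 * J0ᵀ)) / 3) :
    4 / 9 * lamMin (J0 * J0ᵀ) ≤ lamMin (Jk * Jkᵀ) := by
  set L := Real.sqrt (lamMin (J0 * J0ᵀ)) with hL
  have hL0 : 0 ≤ L := Real.sqrt_nonneg _
  have hlam0 : 0 ≤ lamMin (J0 * J0ᵀ) :=
    le_lamMin hn fun v hv => quad_nonneg J0 v
  have hLsq : L * L = lamMin (J0 * J0ᵀ) := Real.mul_self_sqrt hlam0
  refine le_lamMin hn ?_
  intro v hv
  have hvn : ‖ee v‖ = 1 := by rw [← vnorm_eq, hv]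
  have ha : L ≤ ‖ee (J0ᵀ *ᵥ v)‖ := by
    have h1 : lamMin (J0 * J0ᵀ) ≤ v ⬝ᵥ ((J0 * J0ᵀ) *ᵥ v) := lamMin_le_rayleigh J0 v hv
    rw [quad_eq, dot_eq_inner, real_inner_self_eq_norm_mul_norm] at h1
    have h2 := Real.sqrt_le_sqrt h1
    rw [Real.sqrt_mul_self (norm_nonneg _)] at h2
    rw [hL]
    exact h2
  have hb : ‖ee ((Jk - J0)ᵀ *ᵥ v)‖ ≤ L / 3 := by
    set M := (Jk - J0)ᵀ with hM
    have h1 : ‖ee (M *ᵥ v)‖ ≤ ‖M‖ * ‖ee v‖ := by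
      rw [← mcl_apply, ← norm_mcl]
      exact (mcl M).le_opNorm _
    rw [hvn, mul_one, normT] at h1
    exact le_trans h1 hnorm
  have hdecomp : Jkᵀ *ᵥ v - (Jk - J0)ᵀ *ᵥ v = J0ᵀ *ᵥ v := by
    rw [Matrix.transpose_sub, Matrix.sub_mulVec]
    abel
  have hlow : 2 / 3 * L ≤ ‖ee (Jkᵀ *ᵥ v)‖ := by
    have h1 : ‖ee (J0ᵀ *ᵥ v)‖ ≤ ‖ee (Jkᵀ *ᵥ v)‖ + ‖ee ((Jk - J0)ᵀ *ᵥ v)‖ := by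
      calc ‖ee (J0ᵀ *ᵥ v)‖ = ‖ee (Jkᵀ *ᵥ v) - ee ((Jk - J0)ᵀ *ᵥ v)‖ := by
            rw [← ee_sub, hdecomp]
      _ ≤ _ := norm_sub_le _ _
    linarith
  calc 4 / 9 * lamMin (J0 * J0ᵀ) = (2 / 3 * L) * (2 / 3 * L) := by rw [← hLsq]; ring
  _ ≤ ‖ee (Jkᵀ *ᵥ v)‖ * ‖ee (Jkᵀ *ᵥ v)‖ := by
      have := mul_le_mul hlow hlow (by positivity) (norm_nonneg _)
      exact this
  _ = v ⬝ᵥ ((Jk * Jkᵀ) *ᵥ v) := by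
      rw [quad_eq, dot_eq_inner, real_inner_self_eq_norm_mul_norm]

end Main

section MVT
variable {n p : ℕ}

lemma hasFDerivAt_euclid (u : (Fin p → ℝ) → Fin n → ℝ)
    (J : (Fin p → ℝ) → Matrix (Fin n) (Fin p) ℝ)
    (hJ : ∀ θ, HasFDerivAt u (LinearMap.toContinuousLinearMap ((J θ).mulVecLin)) θ)
    (x : EuclideanSpace ℝ (Fin p)) :
    HasFDerivAt (fun z : EuclideanSpace ℝ (Fin p) => ee (u ((WithLp.equiv 2 (Fin p → ℝ)) z)))
      (mcl (J ((WithLp.equiv 2 (Fin p → ℝ)) x))) x := by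
  set eqP := EuclideanSpace.equiv (Fin p) ℝ with heqP
  set eqN := EuclideanSpace.equiv (Fin n) ℝ with heqN
  have h1 : HasFDerivAt (⇑eqN.symm ∘ (u ∘ ⇑eqP))
      ((eqN.symm : (Fin n → ℝ) →L[ℝ] EuclideanSpace ℝ (Fin n)).comp
        ((LinearMap.toContinuousLinearMap ((J (eqP x)).mulVecLin)).comp
          (eqP : EuclideanSpace ℝ (Fin p) →L[ℝ] (Fin p → ℝ)))) x := by
    refine HasFDerivAt.comp x (eqN.symm.hasFDerivAt) ?_
    exact HasFDerivAt.comp x (hJ (eqP x)) (eqP.hasFDerivAt)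
  have heq : ((eqN.symm : (Fin n → ℝ) →L[ℝ] EuclideanSpace ℝ (Fin n)).comp
        ((LinearMap.toContinuousLinearMap ((J (eqP x)).mulVecLin)).comp
          (eqP : EuclideanSpace ℝ (Fin p) →L[ℝ] (Fin p → ℝ))))
      = mcl (J ((WithLp.equiv 2 (Fin p → ℝ)) x)) := by
    refine ContinuousLinearMap.ext fun z => ?_
    rfl
  rw [heq] at h1
  exact h1

lemma key_mvt (u : (Fin p → ℝ) → Fin n → ℝ)
    (J : (Fin p → ℝ) → Matrix (Fin n) (Fin p) ℝ)
    (hJ : ∀ θ, HasFDerivAt u (LinearMap.toContinuousLinearMap ((J θ).mulVecLin)) θ)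
    (θ0 : Fin p → ℝ) (R c : ℝ) (B : Matrix (Fin n) (Fin p) ℝ)
    (hbound : ∀ θ : Fin p → ℝ, ‖ee (θ - θ0)‖ ≤ R → ‖J θ - B‖ ≤ c)
    (θa θb : Fin p → ℝ) (ha : ‖ee (θa - θ0)‖ ≤ R) (hb : ‖ee (θb - θ0)‖ ≤ R) :
    ‖ee (u θb - u θa) - mcl B (ee (θb - θa))‖ ≤ c * ‖ee (θb - θa)‖ := by
  set s : Set (EuclideanSpace ℝ (Fin p)) := Metric.closedBall (ee θ0) R with hs
  have hmem : ∀ θ : Fin p → ℝ, ‖ee (θ - θ0)‖ ≤ R → ee θ ∈ s := by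
    intro θ hθ
    rw [hs, Metric.mem_closedBall, dist_eq_norm, ← ee_sub]
    exact hθ
  have hderiv : ∀ x ∈ s, HasFDerivWithinAt
      (fun z : EuclideanSpace ℝ (Fin p) => ee (u ((WithLp.equiv 2 (Fin p → ℝ)) z)))
      (mcl (J ((WithLp.equiv 2 (Fin p → ℝ)) x))) s x :=
    fun x _ => (hasFDerivAt_euclid u J hJ x).hasFDerivWithinAt
  have hbnd : ∀ x ∈ s, ‖mcl (J ((WithLp.equiv 2 (Fin p → ℝ)) x)) - mcl B‖ ≤ c := by
    intro x hx
    rw [← mcl_sub, norm_mcl]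
    refine hbound _ ?_
    have : ee ((WithLp.equiv 2 (Fin p → ℝ)) x - θ0) = x - ee θ0 := by
      rw [ee_sub]; rfl
    rw [this]
    rw [hs, Metric.mem_closedBall, dist_eq_norm] at hx
    exact hx
  have := Convex.norm_image_sub_le_of_norm_hasFDerivWithin_le' hderiv hbnd
    (convex_closedBall _ _) (hmem θa ha) (hmem θb hb)
  have hsub : (ee θb : EuclideanSpace ℝ (Fin p)) - ee θa = ee (θb - θa) := (ee_sub _ _).symm
  rw [hsub] at this
  have hval : ∀ θ : Fin p → ℝ, u ((WithLp.equiv 2 (Fin p → ℝ)) (ee θ)) = u θ := fun θ => rfl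
  rw [hval, hval, ← ee_sub] at this
  exact this

end MVT


lemma shrink_le {x d : ℝ} (hx : 0 ≤ x) (hd : 0 ≤ d) : (1 - x) * d ≤ d := by nlinarith

lemma calc_id0 {L : ℝ} (hL : L ≠ 0) (a : ℝ) : a / (2 / 3 * L) = a * (3 / (2 * L)) := by
  field_simp

lemma calc_id1 {C η L N0 : ℝ} (hL : L ≠ 0) (h1C : 1 - C ≠ 0) (x : ℝ) :
    η * (x * N0 * (3 / (2 * L))) = ((1 - C) * η) * x * (3 * N0 / (2 * (1 - C) * L)) := by
  field_simp

lemma calc_id2 {C η L N0 : ℝ} (hL : L ≠ 0) (h1C : 1 - C ≠ 0) (x : ℝ) :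
    2 * (C / 3 * L) * ((1 - C) * η * x * (3 * N0 / (2 * (1 - C) * L))) = C * η * (x * N0) := by
  field_simp

lemma lamMin_of_zero (A : Matrix (Fin 0) (Fin 0) ℝ) : lamMin A = 0 := by
  have h : {r : ℝ | ∃ v : Fin 0 → ℝ, vnorm v = 1 ∧ r = v ⬝ᵥ (A *ᵥ v)} = ∅ := by
    ext r
    simp only [Set.mem_setOf_eq, Set.mem_empty_iff_false, iff_false]
    rintro ⟨v, hv, -⟩
    rw [vnorm, dotProduct] at hv
    simp at hv
  rw [lamMin, h, Real.sInf_empty]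

lemma vnorm_zero_of_zero (v : Fin 0 → ℝ) : vnorm v = 0 := by
  rw [vnorm, dotProduct]; simp


/-- Natural gradient descent iterates for a network with outputs `u`, Jacobian `J`,
targets `y`, step size `η`, starting at `θ0`. -/
noncomputable def ngd {n p : ℕ} (J : (Fin p → ℝ) → Matrix (Fin n) (Fin p) ℝ)
    (u : (Fin p → ℝ) → Fin n → ℝ) (y : Fin n → ℝ) (η : ℝ) (θ0 : Fin p → ℝ) :
    ℕ → Fin p → ℝ
  | 0 => θ0
  | k + 1 =>
      ngd J u y η θ0 k -
        η • ((J (ngd J u y η θ0 k))ᵀ *ᵥ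
          ((J (ngd J u y η θ0 k) * (J (ngd J u y η θ0 k))ᵀ)⁻¹ *ᵥ
            (u (ngd J u y η θ0 k) - y)))

/-- **Lemma (no circularity: both invariants hold throughout training).**
Under Conditions 1 and 2 with `0 ≤ C < 1/2` and step size `0 < η ≤ (1-2C)/(1+C)²`,
for every iteration `k`:
(1) `‖θ(k) - θ(0)‖ ≤ 3‖y - u(0)‖/√λmin(G(0))`, and
(2) `λmin(G(k)) ≥ (4/9) λmin(G(0))`. -/
theorem ngd_invariants {n p : ℕ}
    (u : (Fin p → ℝ) → Fin n → ℝ) (J : (Fin p → ℝ) → Matrix (Fin n) (Fin p) ℝ)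
    (hJ : ∀ θ, HasFDerivAt u (LinearMap.toContinuousLinearMap ((J θ).mulVecLin)) θ)
    (hJcont : Continuous J)
    (y : Fin n → ℝ) (θ0 : Fin p → ℝ)
    -- Condition 1
    (hG0 : (J θ0 * (J θ0)ᵀ).PosDef)
    -- Condition 2
    (C : ℝ) (hC0 : 0 ≤ C) (hC : C < 1 / 2)
    (hstab : ∀ θ : Fin p → ℝ,
      vnorm (θ - θ0) ≤ 3 * vnorm (y - u θ0) / Real.sqrt (lamMin (J θ0 * (J θ0)ᵀ)) →
      specNorm (J θ - J θ0) ≤ C / 3 * Real.sqrt (lamMin (J θ0 * (J θ0)ᵀ)))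
    (η : ℝ) (hη0 : 0 < η) (hη : η ≤ (1 - 2 * C) / (1 + C) ^ 2) :
    ∀ k : ℕ,
      vnorm (ngd J u y η θ0 k - θ0) ≤
          3 * vnorm (y - u θ0) / Real.sqrt (lamMin (J θ0 * (J θ0)ᵀ)) ∧
        4 / 9 * lamMin (J θ0 * (J θ0)ᵀ) ≤
          lamMin (J (ngd J u y η θ0 k) * (J (ngd J u y η θ0 k))ᵀ) := by
  rcases Nat.eq_zero_or_pos n with hn | hn
  · subst hn
    have hfix : ∀ k, ngd J u y η θ0 k = θ0 := by
      intro k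
      induction k with
      | zero => rfl
      | succ k ih =>
        show ngd J u y η θ0 k - _ = θ0
        have hz : ∀ w : Fin 0 → ℝ, (J (ngd J u y η θ0 k))ᵀ *ᵥ
            ((J (ngd J u y η θ0 k) * (J (ngd J u y η θ0 k))ᵀ)⁻¹ *ᵥ w) = 0 := by
          intro w
          funext i
          simp [Matrix.mulVec, dotProduct]
        rw [hz, smul_zero, sub_zero, ih]
    intro k
    rw [hfix k]
    constructor
    · rw [sub_self]
      have h1 : vnorm (0 : Fin p → ℝ) = 0 := by
        rw [vnorm_eq, ee_zero, norm_zero]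
      rw [h1, vnorm_zero_of_zero]
      simp
    · rw [lamMin_of_zero]
      norm_num
  · -- main case n > 0
    set lam0 := lamMin (J θ0 * (J θ0)ᵀ) with hlam0
    have hlam0pos : 0 < lam0 := lamMin_pos hn (J θ0) hG0
    set L := Real.sqrt lam0 with hLdef
    have hLpos : 0 < L := Real.sqrt_pos.mpr hlam0pos
    have hLsq : L * L = lam0 := Real.mul_self_sqrt hlam0pos.le
    set N0 : ℝ := ‖ee (y - u θ0)‖ with hN0
    have hN0nn : 0 ≤ N0 := norm_nonneg _
    set R : ℝ := 3 * N0 / L with hRdef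
    set ρ : ℝ := 1 - (1 - C) * η with hρdef
    have hC1 : C < 1 := lt_trans hC (by norm_num)
    have hη1 : η ≤ 1 := by
      refine le_trans hη ?_
      rw [div_le_one (by positivity)]
      nlinarith
    have hρ0 : 0 ≤ ρ := by rw [hρdef]; nlinarith
    have hρlt : ρ < 1 := by rw [hρdef]; nlinarith
    set D : ℝ := 3 * N0 / (2 * (1 - C) * L) with hDdef
    have h1C : (1:ℝ) - C ≠ 0 := by nlinarith
    have hDnn : 0 ≤ D := by
      rw [hDdef]
      apply div_nonneg (by positivity)
      nlinarith
    have hDR : D ≤ R := by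
      rw [hDdef, hRdef]
      apply div_le_div_of_nonneg_left (by positivity) hLpos
      nlinarith
    have hstab' : ∀ θ : Fin p → ℝ, ‖ee (θ - θ0)‖ ≤ R → ‖J θ - J θ0‖ ≤ C / 3 * L := by
      intro θ hθ
      have h1 : vnorm (θ - θ0) ≤ 3 * vnorm (y - u θ0) / L := by
        rw [vnorm_eq, vnorm_eq (y - u θ0)]
        exact hθ
      have h2 := hstab θ h1
      rwa [specNorm_eq] at h2
    have hball : ∀ θ : Fin p → ℝ, ‖ee (θ - θ0)‖ ≤ R →
        4 / 9 * lam0 ≤ lamMin (J θ * (J θ)ᵀ) := by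
      intro θ hθ
      refine lamMin_lower hn (J θ0) (J θ) ?_
      calc ‖J θ - J θ0‖ ≤ C / 3 * L := hstab' θ hθ
      _ ≤ L / 3 := by nlinarith
    have hstep : ∀ θ : Fin p → ℝ, 4 / 9 * lam0 ≤ lamMin (J θ * (J θ)ᵀ) → ∀ r : Fin n → ℝ,
        ‖ee ((J θ)ᵀ *ᵥ ((J θ * (J θ)ᵀ)⁻¹ *ᵥ r))‖ ≤ ‖ee r‖ * (3 / (2 * L)) := by
      intro θ hθ r
      have h1 := step_norm_le (J θ) r (c := 4 / 9 * lam0) (by positivity) hθ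
      have h2 : Real.sqrt (4 / 9 * lam0) = 2 / 3 * L := by
        rw [show (4:ℝ) / 9 * lam0 = (2 / 3) ^ 2 * lam0 by norm_num,
          Real.sqrt_mul (by positivity), Real.sqrt_sq (by norm_num), hLdef]
      rw [h2] at h1
      calc ‖ee ((J θ)ᵀ *ᵥ ((J θ * (J θ)ᵀ)⁻¹ *ᵥ r))‖ ≤ ‖ee r‖ / (2 / 3 * L) := h1
      _ = ‖ee r‖ * (3 / (2 * L)) := calc_id0 hLpos.ne' _
    have main : ∀ k, ‖ee (ngd J u y η θ0 k - θ0)‖ ≤ (1 - ρ ^ k) * D ∧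
        ‖ee (u (ngd J u y η θ0 k) - y)‖ ≤ ρ ^ k * N0 := by
      intro k
      induction k with
      | zero =>
        constructor
        · show ‖ee (θ0 - θ0)‖ ≤ _
          rw [sub_self, ee_zero, norm_zero]
          simp
        · show ‖ee (u θ0 - y)‖ ≤ _
          have he : ee (u θ0 - y) = -(ee (y - u θ0)) := by
            rw [← ee_neg]
            congr 1
            abel
          rw [he, norm_neg, pow_zero, one_mul]
      | succ k ih =>
        obtain ⟨ih1, ih2⟩ := ih
        set θk := ngd J u y η θ0 k with hθk
        set rk := u θk - y with hrk
        set Jk := J θk with hJk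
        set Δ : Fin p → ℝ := η • (Jkᵀ *ᵥ ((Jk * Jkᵀ)⁻¹ *ᵥ rk)) with hΔ
        have hsucc : ngd J u y η θ0 (k + 1) = θk - Δ := rfl
        have hρk : (0:ℝ) ≤ ρ ^ k := pow_nonneg hρ0 k
        have hρk1 : ρ ^ k ≤ 1 := pow_le_one₀ hρ0 hρlt.le
        have hθkR : ‖ee (θk - θ0)‖ ≤ R := le_trans ih1 (le_trans (shrink_le hρk hDnn) hDR)
        have hlamk : 4 / 9 * lam0 ≤ lamMin (Jk * Jkᵀ) := hball θk hθkR
        have hΔle : ‖ee Δ‖ ≤ (1 - ρ) * ρ ^ k * D := by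
          have h1 : ‖ee Δ‖ = η * ‖ee (Jkᵀ *ᵥ ((Jk * Jkᵀ)⁻¹ *ᵥ rk))‖ := by
            rw [hΔ, ee_smul, norm_smul, Real.norm_eq_abs, abs_of_pos hη0]
          have h2 := hstep θk hlamk rk
          rw [h1]
          calc η * ‖ee (Jkᵀ *ᵥ ((Jk * Jkᵀ)⁻¹ *ᵥ rk))‖
              ≤ η * (‖ee rk‖ * (3 / (2 * L))) := mul_le_mul_of_nonneg_left h2 hη0.le
          _ ≤ η * (ρ ^ k * N0 * (3 / (2 * L))) := by
              refine mul_le_mul_of_nonneg_left ?_ hη0.le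
              exact mul_le_mul_of_nonneg_right ih2 (by positivity)
          _ = (1 - ρ) * ρ ^ k * D := by
              rw [hDdef, show (1:ℝ) - ρ = (1 - C) * η from by rw [hρdef]; ring]
              exact calc_id1 hLpos.ne' h1C _
        have hnew1 : ‖ee (ngd J u y η θ0 (k + 1) - θ0)‖ ≤ (1 - ρ ^ (k + 1)) * D := by
          rw [hsucc]
          have hsplit : (θk - Δ - θ0) = (θk - θ0) - Δ := by abel
          rw [hsplit, ee_sub]
          calc ‖ee (θk - θ0) - ee Δ‖ ≤ ‖ee (θk - θ0)‖ + ‖ee Δ‖ := norm_sub_le _ _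
          _ ≤ (1 - ρ ^ k) * D + (1 - ρ) * ρ ^ k * D := add_le_add ih1 hΔle
          _ = (1 - ρ ^ (k + 1)) * D := by ring
        refine ⟨hnew1, ?_⟩
        have hρk1' : (0:ℝ) ≤ ρ ^ (k + 1) := pow_nonneg hρ0 _
        have hθ1R : ‖ee (ngd J u y η θ0 (k + 1) - θ0)‖ ≤ R :=
          le_trans hnew1 (le_trans (shrink_le hρk1' hDnn) hDR)
        set θk1 := ngd J u y η θ0 (k + 1) with hθk1
        have hGkpd : (Jk * Jkᵀ).PosDef := posdef_of_lower Jk (by positivity) hlamk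
        have hbound : ∀ θ : Fin p → ℝ, ‖ee (θ - θ0)‖ ≤ R → ‖J θ - Jk‖ ≤ 2 * (C / 3 * L) := by
          intro θ hθ
          have h1 := hstab' θ hθ
          have h2 := hstab' θk hθkR
          calc ‖J θ - Jk‖ = ‖(J θ - J θ0) - (Jk - J θ0)‖ := by rw [sub_sub_sub_cancel_right]
          _ ≤ ‖J θ - J θ0‖ + ‖Jk - J θ0‖ := norm_sub_le _ _
          _ ≤ 2 * (C / 3 * L) := by linarith
        have hmvt := key_mvt u J hJ θ0 R (2 * (C / 3 * L)) Jk hbound θk θk1 hθkR hθ1R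
        have hθdiff : θk1 - θk = -Δ := by
          rw [hsucc]
          abel
        have hJkΔ : Jk *ᵥ (θk1 - θk) = (-η) • rk := by
          have hcanc : Jk *ᵥ (Jkᵀ *ᵥ ((Jk * Jkᵀ)⁻¹ *ᵥ rk)) = rk := by
            rw [Matrix.mulVec_mulVec]
            exact G_inv_cancel hGkpd rk
          rw [hθdiff, hΔ, Matrix.mulVec_neg, Matrix.mulVec_smul, hcanc, neg_smul]
        have hmclk : mcl Jk (ee (θk1 - θk)) = (-η) • ee rk := by
          rw [mcl_apply, hJkΔ, ee_smul]
        have hres : ee (u θk1 - y) =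
            (ee (u θk1 - u θk) - mcl Jk (ee (θk1 - θk))) + (1 - η) • ee rk := by
          have e1 : ee (u θk1 - u θk) = ee (u θk1) - ee (u θk) := ee_sub _ _
          have e2 : ee rk = ee (u θk) - ee y := by rw [hrk, ee_sub]
          have e3 : ee (u θk1 - y) = ee (u θk1) - ee y := ee_sub _ _
          rw [hmclk, e1, e3, e2]
          module
        calc ‖ee (u θk1 - y)‖
            = ‖(ee (u θk1 - u θk) - mcl Jk (ee (θk1 - θk))) + (1 - η) • ee rk‖ := by
              rw [← hres]
        _ ≤ ‖ee (u θk1 - u θk) - mcl Jk (ee (θk1 - θk))‖ + ‖(1 - η) • ee rk‖ :=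
              norm_add_le _ _
        _ ≤ 2 * (C / 3 * L) * ‖ee (θk1 - θk)‖ + (1 - η) * ‖ee rk‖ := by
              refine add_le_add hmvt ?_
              rw [norm_smul, Real.norm_eq_abs, abs_of_nonneg (by linarith)]
        _ ≤ 2 * (C / 3 * L) * ((1 - ρ) * ρ ^ k * D) + (1 - η) * (ρ ^ k * N0) := by
              refine add_le_add ?_ (mul_le_mul_of_nonneg_left ih2 (by linarith))
              refine mul_le_mul_of_nonneg_left ?_ (by positivity)
              rw [hθdiff, ee_neg, norm_neg]
              exact hΔle
        _ ≤ ρ ^ (k + 1) * N0 := by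
              have hid : 2 * (C / 3 * L) * ((1 - ρ) * ρ ^ k * D) = C * η * (ρ ^ k * N0) := by
                rw [hDdef, show (1:ℝ) - ρ = (1 - C) * η from by rw [hρdef]; ring]
                exact calc_id2 hLpos.ne' h1C _
              have hid2 : C * η * (ρ ^ k * N0) + (1 - η) * (ρ ^ k * N0) = ρ ^ (k + 1) * N0 := by
                rw [pow_succ, hρdef]
                ring
              rw [hid]
              linarith
    intro k
    obtain ⟨h1, h2⟩ := main k
    have hρk : (0:ℝ) ≤ ρ ^ k := pow_nonneg hρ0 k
    have hθkR : ‖ee (ngd J u y η θ0 k - θ0)‖ ≤ R := le_trans h1 (le_trans (shrink_le hρk hDnn) hDR)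
    constructor
    · rw [vnorm_eq, vnorm_eq (y - u θ0)]
      exact hθkR
    · exact hball _ hθkR
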